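/- Stationarity contraction inequality for TD: let x, x' be random vectors with the same marginal distribution, γ ∈ (0,1), and ū, u ∈ ℝ^n. Then E[⟨x, u - ū⟩⟨x - γx', u - ū⟩] ≥ (1-γ) E[⟨x, u - ū⟩²]. -/

import Mathlib

open scoped InnerProductSpace
open MeasureTheory

/-- Stationarity contraction inequality for TD: if `x, x'` are random vectors with
the same marginal distribution and `γ ∈ (0,1)`, then for any `u, ū`,
`E[⟨x, u - ū⟩ ⟨x - γx', u - ū⟩] ≥ (1-γ) E[⟨x, u - ū⟩²]`. -/
theorem stmt18 {n : ℕ} {Ω : Type*} [MeasurableSpace Ω] (μ : Measure Ω)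
    [IsProbabilityMeasure μ]
    (X X' : Ω → EuclideanSpace ℝ (Fin n))
    (hX : AEMeasurable X μ) (hX' : AEMeasurable X' μ)
    (hsame : μ.map X = μ.map X')
    (γ : ℝ) (hγ0 : 0 < γ) (hγ1 : γ < 1)
    (u ub : EuclideanSpace ℝ (Fin n))
    (hint1 : Integrable (fun ω => ⟪X ω, u - ub⟫_ℝ ^ 2) μ)
    (hint2 : Integrable (fun ω => ⟪X' ω, u - ub⟫_ℝ ^ 2) μ)
    (hint3 : Integrable (fun ω => ⟪X ω, u - ub⟫_ℝ * ⟪X' ω, u - ub⟫_ℝ) μ) :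
    (1 - γ) * ∫ ω, ⟪X ω, u - ub⟫_ℝ ^ 2 ∂μ
      ≤ ∫ ω, ⟪X ω, u - ub⟫_ℝ * ⟪X ω - γ • X' ω, u - ub⟫_ℝ ∂μ := by
  set a : Ω → ℝ := fun ω => ⟪X ω, u - ub⟫_ℝ with ha
  set b : Ω → ℝ := fun ω => ⟪X' ω, u - ub⟫_ℝ with hb
  have hpoint : ∀ ω, a ω * ⟪X ω - γ • X' ω, u - ub⟫_ℝ
      = a ω ^ 2 - γ * (a ω * b ω) := by
    intro ω
    simp only [ha, hb, inner_sub_left, real_inner_smul_left]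
    ring
  have hrw : ∫ ω, ⟪X ω, u - ub⟫_ℝ * ⟪X ω - γ • X' ω, u - ub⟫_ℝ ∂μ
      = ∫ ω, a ω ^ 2 ∂μ - γ * ∫ ω, a ω * b ω ∂μ := by
    simp_rw [show ∀ ω, ⟪X ω, u - ub⟫_ℝ * ⟪X ω - γ • X' ω, u - ub⟫_ℝ = a ω ^ 2 - γ * (a ω * b ω) from hpoint]
    rw [integral_sub hint1 (hint3.const_mul γ), integral_const_mul]
  rw [hrw]
  -- same marginals: ∫ b² = ∫ a²
  have hmeas : AEStronglyMeasurable
      (fun y : EuclideanSpace ℝ (Fin n) => (⟪y, u - ub⟫_ℝ) ^ 2) (μ.map X') := by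
    exact (((continuous_id.inner continuous_const).pow 2)).aestronglyMeasurable
  have heq : ∫ ω, b ω ^ 2 ∂μ = ∫ ω, a ω ^ 2 ∂μ := by
    have h1 : ∫ ω, a ω ^ 2 ∂μ
        = ∫ y, (⟪y, u - ub⟫_ℝ) ^ 2 ∂(μ.map X) :=
      (integral_map hX (hsame ▸ hmeas)).symm
    have h2 : ∫ ω, b ω ^ 2 ∂μ
        = ∫ y, (⟪y, u - ub⟫_ℝ) ^ 2 ∂(μ.map X') :=
      (integral_map hX' hmeas).symm
    rw [h1, h2, hsame]
  -- AM-GM: ∫ ab ≤ (∫a² + ∫b²)/2 = ∫a²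
  have hab : ∫ ω, a ω * b ω ∂μ ≤ ∫ ω, a ω ^ 2 ∂μ := by
    have hle : ∀ ω, a ω * b ω ≤ (a ω ^ 2 + b ω ^ 2) / 2 := by
      intro ω
      nlinarith [sq_nonneg (a ω - b ω)]
    have := integral_mono hint3 ((hint1.add hint2).div_const 2) hle
    calc ∫ ω, a ω * b ω ∂μ ≤ ∫ ω, (a ω ^ 2 + b ω ^ 2) / 2 ∂μ := this
      _ = (∫ ω, a ω ^ 2 ∂μ + ∫ ω, b ω ^ 2 ∂μ) / 2 := by
          rw [integral_div, integral_add hint1 hint2]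
      _ = ∫ ω, a ω ^ 2 ∂μ := by rw [heq]; ring
  nlinarith [hab, hγ0]
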